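/- Let A be a ring, P a right A-module, B = End_A(P) its endomorphism ring, and P* = Hom_A(P, A). Then P is a finitely generated projective A-module if and only if P·P* = B, where P·P* is the two-sided ideal of B spanned by the endomorphisms x ↦ p·f(x) for p ∈ P, f ∈ P*. -/

import Mathlib

open MulOpposite

section Aux
variable {A : Type*} [Ring A] {P : Type*} [AddCommGroup P] [Module Aᵐᵒᵖ P]

/-- The rank-one endomorphism `x ↦ op (f x) • p`. -/
def dbAux (p : P) (f : P →ₗ[Aᵐᵒᵖ] A) : Module.End Aᵐᵒᵖ P where
  toFun x := op (f x) • p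
  map_add' x y := by simp only [map_add, op_add, add_smul]
  map_smul' r x := by
    simp only [map_smul, RingHom.id_apply, MulOpposite.smul_eq_mul_unop, op_mul, op_unop, mul_smul]

@[simp] lemma dbAux_apply (p : P) (f : P →ₗ[Aᵐᵒᵖ] A) (x : P) :
    dbAux p f x = op (f x) • p := rfl

/-- `op ∘ f` as a linear map into `Aᵐᵒᵖ`. -/
def dbOp (f : P →ₗ[Aᵐᵒᵖ] A) : P →ₗ[Aᵐᵒᵖ] Aᵐᵒᵖ where
  toFun x := op (f x)
  map_add' x y := by simp only [map_add, op_add]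
  map_smul' r x := by
    simp only [map_smul, RingHom.id_apply, MulOpposite.smul_eq_mul_unop, op_mul, op_unop,
      smul_eq_mul]

/-- The "unop of a coordinate" linear functional. -/
def dbCoord {n : ℕ} (σ : P →ₗ[Aᵐᵒᵖ] (Fin n → Aᵐᵒᵖ)) (i : Fin n) : P →ₗ[Aᵐᵒᵖ] A where
  toFun x := unop (σ x i)
  map_add' x y := by simp only [map_add, Pi.add_apply, unop_add]
  map_smul' r x := by
    simp only [map_smul, RingHom.id_apply, Pi.smul_apply, smul_eq_mul, unop_mul,
      MulOpposite.smul_eq_mul_unop]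

/-- The evaluation map `(Fin n → Aᵐᵒᵖ) →ₗ P` sending `c` to `∑ c i • p i`. -/
def dbPi {n : ℕ} (p : Fin n → P) : (Fin n → Aᵐᵒᵖ) →ₗ[Aᵐᵒᵖ] P where
  toFun c := ∑ i, c i • p i
  map_add' c d := by simp [add_smul, Finset.sum_add_distrib]
  map_smul' r c := by
    simp only [Pi.smul_apply, smul_eq_mul, mul_smul, RingHom.id_apply, Finset.smul_sum]

@[simp] lemma dbPi_apply {n : ℕ} (p : Fin n → P) (c : Fin n → Aᵐᵒᵖ) :
    dbPi p c = ∑ i, c i • p i := rfl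

lemma list_neg_sum {α M : Type*} [AddCommGroup M] (l : List α) (F : α → M) :
    (l.map fun a => -F a).sum = -(l.map F).sum := by
  induction l with
  | nil => simp
  | cons a l ih => simp [ih, neg_add]; abel

lemma list_sum_map_fin {α M : Type*} [AddCommMonoid M] (l : List α) (F : α → M) :
    (l.map F).sum = ∑ i : Fin l.length, F l[i] := by
  induction l with
  | nil => simp
  | cons a l ih =>
    simp only [List.map_cons, List.sum_cons, List.length_cons, Fin.sum_univ_succ,
      List.getElem_cons_zero, Fin.val_succ, List.getElem_cons_succ, ih]
    rfl

end Aux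

theorem dual_basis_lemma
    {A : Type*} [Ring A] {P : Type*} [AddCommGroup P] [Module Aᵐᵒᵖ P] :
    (Module.Finite Aᵐᵒᵖ P ∧ Module.Projective Aᵐᵒᵖ P) ↔
      AddSubgroup.closure
        {h : Module.End Aᵐᵒᵖ P | ∃ (p : P) (f : P →ₗ[Aᵐᵒᵖ] A),
          ∀ x : P, h x = op (f x) • p} = ⊤ := by
  set S : Set (Module.End Aᵐᵒᵖ P) :=
    {h : Module.End Aᵐᵒᵖ P | ∃ (p : P) (f : P →ₗ[Aᵐᵒᵖ] A),
      ∀ x : P, h x = op (f x) • p} with hS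
  constructor
  · rintro ⟨hfin, hproj⟩
    obtain ⟨n, v, hv⟩ := Module.Finite.exists_fin (R := Aᵐᵒᵖ) (M := P)
    have hsurj : Function.Surjective (dbPi (A := A) v) := by
      rw [← LinearMap.range_eq_top, eq_top_iff, ← hv, Submodule.span_le]
      rintro _ ⟨i, rfl⟩
      exact ⟨Pi.single i 1, by simp [Pi.single_apply, Finset.sum_ite_eq']⟩
    obtain ⟨σ, hσ⟩ := Module.projective_lifting_property (dbPi (A := A) v) LinearMap.id hsurj
    have hsec : ∀ x : P, dbPi (A := A) v (σ x) = x := fun x =>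
      congrArg (fun g => g x) hσ
    rw [eq_top_iff]
    intro g _
    have hg : g = ∑ i : Fin n, dbAux (g (v i)) (dbCoord σ i) := by
      ext x
      have : g x = g (∑ i, σ x i • v i) := by rw [← dbPi_apply, hsec]
      rw [LinearMap.sum_apply]
      simp only [dbAux_apply, dbCoord, LinearMap.coe_mk, AddHom.coe_mk, op_unop]
      rw [this, map_sum]
      simp [map_smul]
    rw [hg]
    exact AddSubgroup.sum_mem _ fun i _ =>
      AddSubgroup.subset_closure ⟨g (v i), dbCoord σ i, fun x => rfl⟩
  · intro hcl
    have h1 : (LinearMap.id : Module.End Aᵐᵒᵖ P) ∈ AddSubgroup.closure S := by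
      rw [hcl]; trivial
    have key : ∃ (l : List (P × (P →ₗ[Aᵐᵒᵖ] A))),
        ∀ x : P, x = (l.map fun q => op (q.2 x) • q.1).sum := by
      have := AddSubgroup.closure_induction
        (p := fun (h : Module.End Aᵐᵒᵖ P) (_ : h ∈ AddSubgroup.closure S) =>
          ∃ (l : List (P × (P →ₗ[Aᵐᵒᵖ] A))),
            ∀ x : P, h x = (l.map fun q => op (q.2 x) • q.1).sum)
        (fun h hh => by
          obtain ⟨p, f, hpf⟩ := hh
          exact ⟨[(p, f)], fun x => by simp [hpf x]⟩)
        ⟨[], fun x => by simp⟩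
        (fun a b _ _ ⟨la, hla⟩ ⟨lb, hlb⟩ =>
          ⟨la ++ lb, fun x => by
            simp [LinearMap.add_apply, hla x, hlb x]⟩)
        (fun a _ ⟨la, hla⟩ =>
          ⟨la.map fun q => (-q.1, q.2), fun x => by
            rw [LinearMap.neg_apply, hla x, List.map_map]
            simp only [Function.comp_def, smul_neg]
            exact (list_neg_sum la _).symm⟩)
        h1
      obtain ⟨l, hl⟩ := this
      exact ⟨l, fun x => by simpa using hl x⟩
    obtain ⟨l, hl⟩ := key
    set n := l.length
    set p : Fin n → P := fun i => (l[i]).1 with hp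
    set f : Fin n → (P →ₗ[Aᵐᵒᵖ] A) := fun i => (l[i]).2 with hf
    have hx : ∀ x : P, ∑ i : Fin n, op (f i x) • p i = x := by
      intro x
      conv_rhs => rw [hl x, list_sum_map_fin]
    set σ : P →ₗ[Aᵐᵒᵖ] (Fin n → Aᵐᵒᵖ) := LinearMap.pi (fun i => dbOp (f i)) with hσ
    have hsplit : (dbPi (A := A) p).comp σ = LinearMap.id := by
      ext x
      simpa [hσ, dbOp] using hx x
    constructor
    · exact Module.Finite.of_surjective (dbPi (A := A) p)
        (fun x => ⟨σ x, by simpa [hσ, dbOp] using hx x⟩)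
    · exact Module.Projective.of_split σ (dbPi (A := A) p) hsplit
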